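/- Let F be a field of characteristic ≠ 2, t ∈ F \ {0, -1}. Then 1 + 4·(Yt/(Y²+t))² is not a square in the rational function field F(Y). -/

import Mathlib

/-- For a field `F` of characteristic `≠ 2` and `t ∈ F \ {0, -1}`,
the element `1 + 4 (Y t / (Y² + t))²` is not a square in `F(Y)`. -/
theorem stmt_13 {F : Type*} [Field F] (h2 : ringChar F ≠ 2)
    (t : F) (ht0 : t ≠ 0) (ht1 : t ≠ -1) :
    ¬ ∃ s : RatFunc F,
      s ^ 2 = 1 + 4 * (RatFunc.X * RatFunc.C t / (RatFunc.X ^ 2 + RatFunc.C t)) ^ 2 := by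
  rintro ⟨s, hs⟩
  have h2' : (2 : F) ≠ 0 := Ring.two_ne_zero h2
  set P : Polynomial F := Polynomial.X ^ 4 + Polynomial.C (2*t + 4*t^2) * Polynomial.X ^ 2
      + Polynomial.C (t^2) with hPdef
  have hden : (RatFunc.X ^ 2 + RatFunc.C t : RatFunc F) ≠ 0 := by
    have : ((RatFunc.X : RatFunc F) ^ 2 + RatFunc.C t) =
        algebraMap (Polynomial F) (RatFunc F) (Polynomial.X ^ 2 + Polynomial.C t) := by
      simp [map_add, map_pow, RatFunc.algebraMap_X, RatFunc.algebraMap_C]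
    rw [this]
    intro h
    have := (map_eq_zero_iff _ (IsFractionRing.injective (Polynomial F) (RatFunc F))).mp h
    have h0 : (Polynomial.X ^ 2 + Polynomial.C t : Polynomial F).coeff 0 = 0 := by
      rw [this]; simp
    simp [Polynomial.coeff_X_pow] at h0
    exact ht0 h0
  set r : RatFunc F := s * (RatFunc.X ^ 2 + RatFunc.C t) with hrdef
  have hr : r ^ 2 = algebraMap (Polynomial F) (RatFunc F) P := by
    have hmap : algebraMap (Polynomial F) (RatFunc F) P =
        RatFunc.X ^ 4 + RatFunc.C (2*t + 4*t^2) * RatFunc.X ^ 2 + RatFunc.C (t^2) := by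
      simp [hPdef, map_add, map_mul, map_pow, RatFunc.algebraMap_X, RatFunc.algebraMap_C]
    rw [hmap, hrdef, mul_pow, hs]
    field_simp
    ring_nf
    simp only [map_add, map_mul, map_pow, map_ofNat]
    ring
  have hint : IsIntegral (Polynomial F) r := by
    refine ⟨Polynomial.X ^ 2 - Polynomial.C P, Polynomial.monic_X_pow_sub_C P (by norm_num), ?_⟩
    simp [Polynomial.eval₂_sub, hr]
  obtain ⟨q, hq⟩ := IsIntegrallyClosed.isIntegral_iff.mp hint
  have hq2 : q ^ 2 = P := by
    apply IsFractionRing.injective (Polynomial F) (RatFunc F)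
    rw [map_pow, hq, hr]
  have hdegP : P.natDegree = 4 := by
    rw [hPdef]; compute_degree!
  have hdegq : q.natDegree = 2 := by
    have := hq2 ▸ Polynomial.natDegree_pow q 2
    omega
  have hc3 : q.coeff 3 = 0 := Polynomial.coeff_eq_zero_of_natDegree_lt (by omega)
  have hc4 : q.coeff 4 = 0 := Polynomial.coeff_eq_zero_of_natDegree_lt (by omega)
  have hPc : ∀ n, P.coeff n = (Polynomial.X ^ 4 : Polynomial F).coeff n
      + (2*t + 4*t^2) * (Polynomial.X ^ 2 : Polynomial F).coeff n
      + (if n = 0 then t^2 else 0) := by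
    intro n
    simp only [hPdef, Polynomial.coeff_add, Polynomial.coeff_C_mul, Polynomial.coeff_C]
  have hP0 : P.coeff 0 = t^2 := by rw [hPc]; simp [Polynomial.coeff_X_pow]
  have hP2 : P.coeff 2 = 2*t + 4*t^2 := by rw [hPc]; simp [Polynomial.coeff_X_pow]
  have hP3 : P.coeff 3 = 0 := by rw [hPc]; simp [Polynomial.coeff_X_pow]
  have hP4 : P.coeff 4 = 1 := by rw [hPc]; simp [Polynomial.coeff_X_pow]
  have ecoeff : ∀ n, (q*q).coeff n = P.coeff n := fun n => by
    rw [← hq2]; ring_nf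
  have e0 := ecoeff 0
  have e2 := ecoeff 2
  have e3 := ecoeff 3
  have e4 := ecoeff 4
  rw [hP0] at e0; rw [hP2] at e2; rw [hP3] at e3; rw [hP4] at e4
  simp only [Polynomial.coeff_mul,
    Finset.Nat.sum_antidiagonal_eq_sum_range_succ_mk, Finset.sum_range_succ,
    Finset.sum_range_zero, zero_add, hc3, hc4, mul_zero, zero_mul, add_zero] at e0 e2 e3 e4
  have ha2 : q.coeff 2 ≠ 0 := by
    intro h; rw [h] at e4; simp at e4
  have ha1 : q.coeff 1 = 0 := by
    have : 2 * (q.coeff 1 * q.coeff 2) = 0 := by linear_combination e3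
    rcases mul_eq_zero.mp this with h | h
    · exact absurd h h2'
    · exact (mul_eq_zero.mp h).resolve_right ha2
  have key : (16:F) * t^3 * (1+t) = 0 := by
    have hA : q.coeff 0 * q.coeff 2 + q.coeff 1 * q.coeff 1 + q.coeff 2 * q.coeff 0
        = 2*t + 4*t^2 := e2
    have hB : q.coeff 0 * q.coeff 0 = t^2 := e0
    have hC : q.coeff 2 * q.coeff 2 = 1 := e4
    rw [ha1] at hA
    linear_combination (-(q.coeff 0 * q.coeff 2 + q.coeff 2 * q.coeff 0 + 2*t + 4*t^2)) * hA
      + 4*(q.coeff 2)^2 * hB + 4*t^2 * hC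
  have h16 : (16:F) ≠ 0 := by
    have : (16:F) = 2^4 := by norm_num
    rw [this]; exact pow_ne_zero _ h2'
  rcases mul_eq_zero.mp key with h | h
  · rcases mul_eq_zero.mp h with h | h
    · exact h16 h
    · exact ht0 (pow_eq_zero_iff (by norm_num) |>.mp h)
  · exact ht1 (by linear_combination h)
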